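/- Let Z be a Banach space with an unconditional Schauder decomposition (Z_n)_{n≥1} satisfying a lower 2-estimate, let X_n = Z_1 ⊕ ⋯ ⊕ Z_n with inclusion maps φ_n, and let T_n : Z → X_n be the associated aggregate projections (so T_n(z) → z). Then T(z) = (T_n(z))_{n≥1} defines a bounded linear embedding T : Z → Ĵ(X_n), with ‖T(z)‖_J ≤ √((M+1)/2)·K·‖z‖, where K is the suppression constant of the decomposition and M is its lower 2-estimate constant; moreover Ĵ(X_n) = J(X_n) ⊕ R(T), so Ĵ(X_n) ≅ J(X_n) ⊕ Z. -/

import Mathlib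

open Filter Topology

/-- Composition `φ_n^m = φ_{m-1} ∘ ⋯ ∘ φ_n : X n →L X m` (junk value for `m < n`). -/
noncomputable def phiTo {X : ℕ → Type*} [∀ n, NormedAddCommGroup (X n)]
    [∀ n, NormedSpace ℝ (X n)] (φ : ∀ n, X n →L[ℝ] X (n + 1)) (n : ℕ) :
    (m : ℕ) → X n →L[ℝ] X m
  | 0 => 0
  | m + 1 =>
    if h : m + 1 = n then by rw [h]; exact ContinuousLinearMap.id ℝ (X n)
    else (φ m).comp (phiTo φ n m)

open Classical in
/-- `σ(x,S)²`: the sum over consecutive pairs `p < q` of `S` of `‖φ_p^q(x_p) - x_q‖²`. -/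
noncomputable def sigma2 {X : ℕ → Type*} [∀ n, NormedAddCommGroup (X n)]
    [∀ n, NormedSpace ℝ (X n)] (φ : ∀ n, X n →L[ℝ] X (n + 1))
    (x : ∀ n, X n) (S : Finset ℕ) : ℝ :=
  ∑ p ∈ S, ∑ q ∈ S,
    if p < q ∧ ∀ r ∈ S, ¬(p < r ∧ r < q) then ‖phiTo φ p q (x p) - x q‖ ^ 2 else 0

noncomputable def sigmaJ {X : ℕ → Type*} [∀ n, NormedAddCommGroup (X n)]
    [∀ n, NormedSpace ℝ (X n)] (φ : ∀ n, X n →L[ℝ] X (n + 1))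
    (x : ∀ n, X n) (S : Finset ℕ) : ℝ :=
  Real.sqrt (sigma2 φ x S)

/-- `ρ(x,S)² = σ(x,S)² + ‖x_{max S}‖²`. -/
noncomputable def rho2 {X : ℕ → Type*} [∀ n, NormedAddCommGroup (X n)]
    [∀ n, NormedSpace ℝ (X n)] (φ : ∀ n, X n →L[ℝ] X (n + 1))
    (x : ∀ n, X n) (S : Finset ℕ) (hS : S.Nonempty) : ℝ :=
  sigma2 φ x S + ‖x (S.max' hS)‖ ^ 2

noncomputable def rhoJ {X : ℕ → Type*} [∀ n, NormedAddCommGroup (X n)]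
    [∀ n, NormedSpace ℝ (X n)] (φ : ∀ n, X n →L[ℝ] X (n + 1))
    (x : ∀ n, X n) (S : Finset ℕ) (hS : S.Nonempty) : ℝ :=
  Real.sqrt (rho2 φ x S hS)

/-- The set of values `ρ(x,S)` over finite nonempty `S ⊆ ℕ`. -/
def rhoSet {X : ℕ → Type*} [∀ n, NormedAddCommGroup (X n)]
    [∀ n, NormedSpace ℝ (X n)] (φ : ∀ n, X n →L[ℝ] X (n + 1))
    (x : ∀ n, X n) : Set ℝ :=
  {r : ℝ | ∃ (S : Finset ℕ) (hS : S.Nonempty), r = rhoJ φ x S hS}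

/-- Membership in `Ĵ(Φ)`: `sup_S ρ(x,S) < ∞`. -/
def memJhat {X : ℕ → Type*} [∀ n, NormedAddCommGroup (X n)]
    [∀ n, NormedSpace ℝ (X n)] (φ : ∀ n, X n →L[ℝ] X (n + 1))
    (x : ∀ n, X n) : Prop :=
  BddAbove (rhoSet φ x)

/-- The norm `‖x‖_J = (1/√2) sup_S ρ(x,S)`. -/
noncomputable def normJ {X : ℕ → Type*} [∀ n, NormedAddCommGroup (X n)]
    [∀ n, NormedSpace ℝ (X n)] (φ : ∀ n, X n →L[ℝ] X (n + 1))
    (x : ∀ n, X n) : ℝ :=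
  (Real.sqrt 2)⁻¹ * sSup (rhoSet φ x)

/-- Membership in `J(Φ)`: member of `Ĵ(Φ)` with `‖x_n‖ → 0`. -/
def memJ {X : ℕ → Type*} [∀ n, NormedAddCommGroup (X n)]
    [∀ n, NormedSpace ℝ (X n)] (φ : ∀ n, X n →L[ℝ] X (n + 1))
    (x : ∀ n, X n) : Prop :=
  memJhat φ x ∧ Tendsto (fun n => ‖x n‖) atTop (𝓝 0)

open Classical in
/-- The coordinate restriction `P_I`. -/
noncomputable def restrictSeq {X : ℕ → Type*} [∀ n, NormedAddCommGroup (X n)]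
    (I : Set ℕ) (x : ∀ n, X n) : ∀ n, X n :=
  fun n => if n ∈ I then x n else 0

/-- The stepping map `Q_α`. -/
noncomputable def stepSeq {X : ℕ → Type*} [∀ n, NormedAddCommGroup (X n)]
    [∀ n, NormedSpace ℝ (X n)] (φ : ∀ n, X n →L[ℝ] X (n + 1))
    (α : ℕ → ℕ) (x : ∀ n, X n) : ∀ n, X n :=
  fun n => phiTo φ (α n) n (x (α n))

section Aux
variable {X : ℕ → Type*} [∀ n, NormedAddCommGroup (X n)] [∀ n, NormedSpace ℝ (X n)]
  (φ : ∀ n, X n →L[ℝ] X (n + 1))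

lemma phiTo_zero (m : ℕ) : phiTo φ 0 m = 0 := by
  induction m with
  | zero => rfl
  | succ m ih =>
    simp only [phiTo, dif_neg (show ¬ (m+1=0) by omega)]
    rw [ih]; ext v; simp

lemma phiTo_self (n : ℕ) (hn : 1 ≤ n) : phiTo φ n n = ContinuousLinearMap.id ℝ (X n) := by
  cases n with
  | zero => omega
  | succ m => simp only [phiTo, dif_pos rfl]; rfl

lemma phiTo_succ_of_le (n m : ℕ) (hn : 1 ≤ n) (h : n ≤ m) :
    phiTo φ n (m + 1) = (φ m).comp (phiTo φ n m) := by
  simp only [phiTo, dif_neg (show ¬ (m+1=n) by omega)]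

end Aux

section Coe
variable {Z : Type*} [NormedAddCommGroup Z] [NormedSpace ℝ Z]
  (Xs : ℕ → Submodule ℝ Z) (φ : ∀ n, ↥(Xs n) →L[ℝ] ↥(Xs (n + 1)))
  (hφ : ∀ n (v : ↥(Xs n)), ((φ n v : Z)) = (v : Z))

include hφ in
lemma phiTo_coe (p : ℕ) (hp : 1 ≤ p) : ∀ q, p ≤ q → ∀ v : ↥(Xs p), ((phiTo φ p q v : Z)) = (v : Z) := by
  intro q hq
  induction q, hq using Nat.le_induction with
  | base => intro v; rw [phiTo_self φ p hp]; rfl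
  | succ m hm ih =>
    intro v
    rw [phiTo_succ_of_le φ p m hp hm]
    simp only [ContinuousLinearMap.comp_apply, hφ]
    exact ih v

end Coe

open Classical in
noncomputable def consPairs (S : Finset ℕ) : Finset (ℕ × ℕ) :=
  (S ×ˢ S).filter (fun pq => pq.1 < pq.2 ∧ ∀ r ∈ S, ¬(pq.1 < r ∧ r < pq.2))

section CP
variable {X : ℕ → Type*} [∀ n, NormedAddCommGroup (X n)] [∀ n, NormedSpace ℝ (X n)]
  (φ : ∀ n, X n →L[ℝ] X (n + 1))

lemma sigma2_eq (x : ∀ n, X n) (S : Finset ℕ) :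
    sigma2 φ x S = ∑ pq ∈ consPairs S, ‖phiTo φ pq.1 pq.2 (x pq.1) - x pq.2‖ ^ 2 := by
  classical
  rw [sigma2, ← Finset.sum_product', consPairs, Finset.sum_filter]

lemma sigma2_nonneg (x : ∀ n, X n) (S : Finset ℕ) : 0 ≤ sigma2 φ x S := by
  classical
  apply Finset.sum_nonneg; intro p _
  apply Finset.sum_nonneg; intro q _
  split <;> positivity

lemma mem_consPairs {S : Finset ℕ} {pq : ℕ × ℕ} :
    pq ∈ consPairs S ↔ pq.1 ∈ S ∧ pq.2 ∈ S ∧ pq.1 < pq.2 ∧ ∀ r ∈ S, ¬(pq.1 < r ∧ r < pq.2) := by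
  classical
  simp [consPairs, Finset.mem_filter, Finset.mem_product, and_assoc]

lemma consPairs_disjoint {S : Finset ℕ} {pq pq' : ℕ × ℕ}
    (h : pq ∈ consPairs S) (h' : pq' ∈ consPairs S) (hne : pq ≠ pq') :
    Disjoint (Finset.Ioc pq.1 pq.2) (Finset.Ioc pq'.1 pq'.2) := by
  rw [mem_consPairs] at h h'
  obtain ⟨hp, hq, hlt, hcons⟩ := h
  obtain ⟨hp', hq', hlt', hcons'⟩ := h'
  rw [Finset.disjoint_left]
  intro a ha ha'
  rw [Finset.mem_Ioc] at ha ha'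
  rcases lt_trichotomy pq.1 pq'.1 with hc | hc | hc
  · have hsep : pq.2 ≤ pq'.1 := by
      by_contra hcon
      push_neg at hcon
      exact hcons pq'.1 hp' ⟨hc, hcon⟩
    omega
  · have h2 : pq.2 = pq'.2 := by
      rcases lt_trichotomy pq.2 pq'.2 with hd | hd | hd
      · exact absurd ⟨by omega, hd⟩ (hcons' pq.2 hq)
      · exact hd
      · exact absurd ⟨by omega, hd⟩ (hcons pq'.2 hq')
    exact hne (Prod.ext hc h2)
  · have hsep : pq'.2 ≤ pq.1 := by
      by_contra hcon
      push_neg at hcon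
      exact hcons' pq.1 hp ⟨hc, hcon⟩
    omega

end CP

section Low
variable {Z : Type*} [NormedAddCommGroup Z] [NormedSpace ℝ Z]

lemma lower2' (W : ℕ → Submodule ℝ Z) (P : ℕ → Z →L[ℝ] Z) (K M : ℝ) (hM0 : 0 ≤ M)
    (hmem : ∀ n z, P n z ∈ W n)
    (hproj : ∀ n, ∀ z ∈ W n, P n z = z)
    (horth : ∀ i j, i ≠ j → ∀ z, P i (P j z) = 0)
    (hK : ∀ (F : Finset ℕ) (z : Z), ‖∑ n ∈ F, P n z‖ ≤ K * ‖z‖)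
    (hM : ∀ (k : ℕ) (A : Fin k → Finset ℕ), Pairwise (Function.onFun Disjoint A) →
      ∀ z : Fin k → Z, (∀ i, ∑ n ∈ A i, P n (z i) = z i) →
      ∑ i, ‖z i‖ ^ 2 ≤ M * ‖∑ i, z i‖ ^ 2)
    (z : Z) (k : ℕ) (A : Fin k → Finset ℕ) (hd : Pairwise (Function.onFun Disjoint A)) :
    ∑ i, ‖∑ n ∈ A i, P n z‖ ^ 2 ≤ M * (K * ‖z‖) ^ 2 := by
  classical
  set zz : Fin k → Z := fun i => ∑ m ∈ A i, P m z with hzzdef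
  have hzz : ∀ i, ∑ n ∈ A i, P n (zz i) = zz i := by
    intro i
    simp only [hzzdef, map_sum]
    refine Finset.sum_congr rfl (fun n hn => ?_)
    rw [Finset.sum_eq_single_of_mem n hn (fun m _ hne => horth n m (Ne.symm hne) z)]
    exact hproj n _ (hmem n z)
  have h1 := hM k A hd zz hzz
  have hsum : ∑ i, zz i = ∑ n ∈ Finset.univ.biUnion A, P n z := by
    rw [Finset.sum_biUnion]
    intro i _ j _ hij
    exact hd hij
  have h2 : ‖∑ i, zz i‖ ≤ K * ‖z‖ := by rw [hsum]; exact hK _ z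
  have h3 : ‖∑ i, zz i‖ ^ 2 ≤ (K * ‖z‖) ^ 2 :=
    pow_le_pow_left₀ (norm_nonneg _) h2 2
  calc ∑ i, ‖zz i‖ ^ 2 ≤ M * ‖∑ i, zz i‖ ^ 2 := h1
    _ ≤ M * (K * ‖z‖) ^ 2 := mul_le_mul_of_nonneg_left h3 hM0

end Low

section Main
variable {Z : Type*} [NormedAddCommGroup Z] [NormedSpace ℝ Z] [CompleteSpace Z]
    (W : ℕ → Submodule ℝ Z) (P : ℕ → Z →L[ℝ] Z) (K M : ℝ)
    (hmem : ∀ n z, P n z ∈ W n)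
    (hproj : ∀ n, ∀ z ∈ W n, P n z = z)
    (horth : ∀ i j, i ≠ j → ∀ z, P i (P j z) = 0)
    (hdecomp : ∀ z : Z, HasSum (fun n => P (n + 1) z) z)
    (hK : ∀ (F : Finset ℕ) (z : Z), ‖∑ n ∈ F, P n z‖ ≤ K * ‖z‖)
    (hM : ∀ (k : ℕ) (A : Fin k → Finset ℕ), Pairwise (Function.onFun Disjoint A) →
      ∀ z : Fin k → Z, (∀ i, ∑ n ∈ A i, P n (z i) = z i) →
      ∑ i, ‖z i‖ ^ 2 ≤ M * ‖∑ i, z i‖ ^ 2)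
    (Xs : ℕ → Submodule ℝ Z)
    (φ : ∀ n, ↥(Xs n) →L[ℝ] ↥(Xs (n + 1)))
    (hφ : ∀ n (v : ↥(Xs n)), ((φ n v : Z)) = (v : Z))
    (T : Z → ∀ n, ↥(Xs n))
    (hT : ∀ z n, ((T z n : Z)) = ∑ i ∈ Finset.Icc 1 n, P i z)

include hK in
lemma hK0' (z : Z) : 0 ≤ K * ‖z‖ := by simpa using hK ∅ z

include hT in
lemma Tz0 (z : Z) : T z 0 = 0 := by
  apply Subtype.ext
  rw [hT z 0]
  simp [Finset.Icc_eq_empty (show ¬ (1:ℕ) ≤ 0 by omega)]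

include hφ hT in
lemma phiTo_coe_T (z : Z) (p q : ℕ) (hpq : p ≤ q) :
    ((phiTo φ p q (T z p) : Z)) = ∑ i ∈ Finset.Icc 1 p, P i z := by
  rcases Nat.eq_zero_or_pos p with hp | hp
  · subst hp
    rw [phiTo_zero]
    simp [Finset.Icc_eq_empty (show ¬ (1:ℕ) ≤ 0 by omega)]
  · rw [phiTo_coe Xs φ hφ p hp q hpq, hT]

include hφ hT in
lemma term_eq (z : Z) (p q : ℕ) (hpq : p ≤ q) :
    ‖phiTo φ p q (T z p) - T z q‖ = ‖∑ i ∈ Finset.Ioc p q, P i z‖ := by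
  have h1 : ‖phiTo φ p q (T z p) - T z q‖
      = ‖((phiTo φ p q (T z p) : Z)) - ((T z q : Z))‖ := rfl
  rw [h1, phiTo_coe_T P Xs φ hφ T hT z p q hpq, hT]
  have hicc : ∀ n : ℕ, Finset.Icc 1 n = Finset.Ioc 0 n := fun n => Finset.Icc_add_one_left_eq_Ioc 0 n
  rw [hicc, hicc, norm_sub_rev]
  congr 1
  have := Finset.sum_Ioc_consecutive (fun i => P i z) (Nat.zero_le p) hpq
  rw [← this]; abel

set_option linter.unusedSectionVars false

include hmem hproj horth hK hM hφ hT in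
lemma sigma2_T_le (hM0 : 0 ≤ M) (z : Z) (S : Finset ℕ) :
    sigma2 φ (T z) S ≤ M * (K * ‖z‖) ^ 2 := by
  classical
  rw [sigma2_eq]
  rw [Finset.sum_congr rfl (fun pq hpq => by
    rw [term_eq P Xs φ hφ T hT z pq.1 pq.2 (le_of_lt (mem_consPairs.mp hpq).2.2.1)])]
  set PS := consPairs S with hPS
  set k := PS.card with hk
  set e := PS.equivFin with he
  have hsum : ∑ pq ∈ PS, ‖∑ i ∈ Finset.Ioc pq.1 pq.2, P i z‖ ^ 2
      = ∑ i : Fin k, ‖∑ n ∈ Finset.Ioc ((e.symm i : ℕ × ℕ)).1 ((e.symm i : ℕ × ℕ)).2, P n z‖ ^ 2 := by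
    rw [← Finset.sum_attach PS (fun pq => ‖∑ i ∈ Finset.Ioc pq.1 pq.2, P i z‖ ^ 2)]
    exact Fintype.sum_equiv e _ _ (fun pq => by simp)
  rw [hsum]
  refine lower2' W P K M hM0 hmem hproj horth hK hM z k _ ?_
  intro i j hij
  refine consPairs_disjoint (e.symm i).2 (e.symm j).2 ?_
  intro hval
  exact hij (e.symm.injective (Subtype.ext hval))

include hmem hproj horth hK hM hφ hT in
lemma rho2_T_le (hM0 : 0 ≤ M) (z : Z) (S : Finset ℕ) (hS : S.Nonempty) :
    rho2 φ (T z) S hS ≤ (M + 1) * (K * ‖z‖) ^ 2 := by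
  rw [rho2]
  have h1 := sigma2_T_le W P K M hmem hproj horth hK hM Xs φ hφ T hT hM0 z S
  have h2 : ‖T z (S.max' hS)‖ ≤ K * ‖z‖ := by
    have : ‖T z (S.max' hS)‖ = ‖((T z (S.max' hS) : Z))‖ := rfl
    rw [this, hT]
    exact hK _ z
  have h3 : ‖T z (S.max' hS)‖ ^ 2 ≤ (K * ‖z‖) ^ 2 :=
    pow_le_pow_left₀ (norm_nonneg _) h2 2
  nlinarith

include hmem hproj horth hK hM hφ hT in
lemma memJhat_T (hM0 : 0 ≤ M) (z : Z) : memJhat φ (T z) := by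
  refine ⟨Real.sqrt ((M + 1) * (K * ‖z‖) ^ 2), ?_⟩
  rintro r ⟨S, hS, rfl⟩
  rw [rhoJ]
  exact Real.sqrt_le_sqrt (rho2_T_le W P K M hmem hproj horth hK hM Xs φ hφ T hT hM0 z S hS)

include hdecomp in
lemma hpartial (w : Z) :
    Tendsto (fun n => ∑ i ∈ Finset.Icc 1 n, P i w) atTop (𝓝 w) := by
  have h := (hdecomp w).tendsto_sum_nat
  have heq : ∀ n, ∑ i ∈ Finset.Icc 1 n, P i w = ∑ i ∈ Finset.range n, P (i + 1) w := by
    intro n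
    rw [← Finset.Ico_add_one_right_eq_Icc, Finset.sum_Ico_eq_sum_range]
    simp [add_comm 1]
  simpa [funext heq] using h

include hmem hproj horth hK hM hφ hT in
lemma normJ_T_le (hM0 : 0 ≤ M) (z : Z) :
    normJ φ (T z) ≤ Real.sqrt ((M + 1) / 2) * K * ‖z‖ := by
  rw [normJ]
  have hb : ∀ r ∈ rhoSet φ (T z), r ≤ Real.sqrt (M + 1) * (K * ‖z‖) := by
    rintro r ⟨S, hS, rfl⟩
    rw [rhoJ]
    calc Real.sqrt (rho2 φ (T z) S hS)
        ≤ Real.sqrt ((M + 1) * (K * ‖z‖) ^ 2) :=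
          Real.sqrt_le_sqrt (rho2_T_le W P K M hmem hproj horth hK hM Xs φ hφ T hT hM0 z S hS)
      _ = Real.sqrt (M + 1) * (K * ‖z‖) := by
          rw [Real.sqrt_mul (by linarith) ((K * ‖z‖) ^ 2), Real.sqrt_sq (hK0' P K hK z)]
  have hs : sSup (rhoSet φ (T z)) ≤ Real.sqrt (M + 1) * (K * ‖z‖) :=
    Real.sSup_le hb (mul_nonneg (Real.sqrt_nonneg _) (hK0' P K hK z))
  calc (Real.sqrt 2)⁻¹ * sSup (rhoSet φ (T z))
      ≤ (Real.sqrt 2)⁻¹ * (Real.sqrt (M + 1) * (K * ‖z‖)) := by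
        apply mul_le_mul_of_nonneg_left hs (by positivity)
    _ = Real.sqrt ((M + 1) / 2) * K * ‖z‖ := by
        rw [Real.sqrt_div (by linarith : (0:ℝ) ≤ M + 1) 2]
        field_simp

include hφ in
lemma cauchy_of_memJhat (x : ∀ n, ↥(Xs n)) (hx : memJhat φ x) :
    CauchySeq (fun n => (x n : Z)) := by
  classical
  obtain ⟨B, hB⟩ := hx
  have hB0 : 0 ≤ B := by
    have h0 : rhoJ φ x {0} (Finset.singleton_nonempty 0) ∈ rhoSet φ x :=
      ⟨{0}, Finset.singleton_nonempty 0, rfl⟩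
    exact le_trans (Real.sqrt_nonneg _) (hB h0)
  by_contra hnc
  rw [Metric.cauchySeq_iff] at hnc
  push_neg at hnc
  obtain ⟨ε, hε, hcon⟩ := hnc
  have hpair : ∀ N, ∃ pp qq : ℕ, N ≤ pp ∧ pp < qq ∧ ε ≤ ‖((x pp : Z)) - ((x qq : Z))‖ := by
    intro N
    obtain ⟨m, hm, n, hn, hd⟩ := hcon N
    have hmn : m ≠ n := by
      intro h; subst h; simp at hd; linarith
    rcases lt_or_gt_of_ne hmn with h | h
    · exact ⟨m, n, hm, h, by rw [dist_eq_norm] at hd; linarith⟩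
    · exact ⟨n, m, hn, h, by rw [dist_eq_norm, norm_sub_rev] at hd; linarith⟩
  obtain ⟨p, q, hpq⟩ : ∃ p q : ℕ → ℕ,
      ∀ N, N ≤ p N ∧ p N < q N ∧ ε ≤ ‖((x (p N) : Z)) - ((x (q N) : Z))‖ := by
    choose p q h1 h2 h3 using hpair
    exact ⟨p, q, fun N => ⟨h1 N, h2 N, h3 N⟩⟩
  set a : ℕ → ℕ := fun k => Nat.rec 1 (fun _ ak => q ak + 1) k with ha
  set Pk : ℕ → ℕ := fun k => p (a k) with hPk
  set Qk : ℕ → ℕ := fun k => q (a k) with hQk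
  have haS : ∀ k, a (k + 1) = Qk k + 1 := fun k => rfl
  have h1 : ∀ k, a k ≤ Pk k := fun k => (hpq (a k)).1
  have h2 : ∀ k, Pk k < Qk k := fun k => (hpq (a k)).2.1
  have h3 : ∀ k, ε ≤ ‖((x (Pk k) : Z)) - ((x (Qk k) : Z))‖ := fun k => (hpq (a k)).2.2
  have ha1 : ∀ k, 1 ≤ a k := by
    intro k; induction k with
    | zero => exact le_refl 1
    | succ k ih => rw [haS]; omega
  have hamono : Monotone a :=
    monotone_nat_of_le_succ (fun k => by rw [haS]; have := h1 k; have := h2 k; omega)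
  have hQP : ∀ i j, i < j → Qk i < Pk j := by
    intro i j hij
    calc Qk i < a (i + 1) := by rw [haS]; omega
      _ ≤ a j := hamono hij
      _ ≤ Pk j := h1 j
  -- the finite set of the first k pairs
  set S : ℕ → Finset ℕ :=
    fun k => (Finset.range k).image Pk ∪ (Finset.range k).image Qk with hSdef
  have hPmem : ∀ i k, i < k → Pk i ∈ S k := by
    intro i k hik
    exact Finset.mem_union_left _ (Finset.mem_image_of_mem _ (Finset.mem_range.mpr hik))
  have hQmem : ∀ i k, i < k → Qk i ∈ S k := by
    intro i k hik
    exact Finset.mem_union_right _ (Finset.mem_image_of_mem _ (Finset.mem_range.mpr hik))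
  have hcons : ∀ i k, i < k → (Pk i, Qk i) ∈ consPairs (S k) := by
    intro i k hik
    rw [mem_consPairs]
    refine ⟨hPmem i k hik, hQmem i k hik, h2 i, ?_⟩
    intro r hr ⟨hr1, hr2⟩
    simp only [hSdef, Finset.mem_union, Finset.mem_image, Finset.mem_range] at hr
    rcases hr with ⟨j, _, rfl⟩ | ⟨j, _, rfl⟩
    · rcases lt_trichotomy j i with hj | hj | hj
      · have := hQP j i hj; have := h2 j; omega
      · subst hj; omega
      · have := hQP i j hj; omega
    · rcases lt_trichotomy j i with hj | hj | hj
      · have := hQP j i hj; omega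
      · subst hj; omega
      · have := hQP i j hj; have := h2 j; omega
  -- lower bound for sigma2
  have hsig : ∀ k : ℕ, (k : ℝ) * ε ^ 2 ≤ sigma2 φ x (S k) := by
    intro k
    rw [sigma2_eq]
    have hsub : (Finset.range k).image (fun i => (Pk i, Qk i)) ⊆ consPairs (S k) := by
      intro pq hpq'
      simp only [Finset.mem_image, Finset.mem_range] at hpq'
      obtain ⟨i, hik, rfl⟩ := hpq'
      exact hcons i k hik
    have hle : ∑ pq ∈ (Finset.range k).image (fun i => (Pk i, Qk i)),
        ‖phiTo φ pq.1 pq.2 (x pq.1) - x pq.2‖ ^ 2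
        ≤ ∑ pq ∈ consPairs (S k), ‖phiTo φ pq.1 pq.2 (x pq.1) - x pq.2‖ ^ 2 :=
      Finset.sum_le_sum_of_subset_of_nonneg hsub (fun _ _ _ => by positivity)
    have hinj : ∀ i ∈ Finset.range k, ∀ j ∈ Finset.range k,
        (Pk i, Qk i) = (Pk j, Qk j) → i = j := by
      intro i _ j _ hij
      by_contra hne
      rcases lt_or_gt_of_ne hne with h | h
      · have := hQP i j h; have := h2 i
        have : Pk i ≠ Pk j := by omega
        exact this (congrArg Prod.fst hij)
      · have := hQP j i h; have := h2 j
        have : Pk i ≠ Pk j := by omega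
        exact this (congrArg Prod.fst hij)
    rw [Finset.sum_image hinj] at hle
    refine le_trans ?_ hle
    have hterm : ∀ i ∈ Finset.range k,
        ε ^ 2 ≤ ‖phiTo φ (Pk i) (Qk i) (x (Pk i)) - x (Qk i)‖ ^ 2 := by
      intro i _
      have hco : ‖phiTo φ (Pk i) (Qk i) (x (Pk i)) - x (Qk i)‖
          = ‖((x (Pk i) : Z)) - ((x (Qk i) : Z))‖ := by
        have : ‖phiTo φ (Pk i) (Qk i) (x (Pk i)) - x (Qk i)‖
            = ‖((phiTo φ (Pk i) (Qk i) (x (Pk i)) : Z)) - ((x (Qk i) : Z))‖ := rfl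
        rw [this, phiTo_coe Xs φ hφ (Pk i) (le_trans (ha1 i) (h1 i)) (Qk i) (le_of_lt (h2 i))]
      rw [hco]
      exact pow_le_pow_left₀ (le_of_lt hε) (h3 i) 2
    calc (k : ℝ) * ε ^ 2 = ∑ _i ∈ Finset.range k, ε ^ 2 := by
          rw [Finset.sum_const, Finset.card_range, nsmul_eq_mul]
      _ ≤ _ := Finset.sum_le_sum hterm
  -- upper bound via B, contradiction
  obtain ⟨k, hk⟩ := exists_nat_gt (B ^ 2 / ε ^ 2)
  have hk0 : 0 < k := by
    rcases Nat.eq_zero_or_pos k with h | h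
    · subst h
      simp only [Nat.cast_zero] at hk
      have : (0:ℝ) ≤ B ^ 2 / ε ^ 2 := by positivity
      linarith
    · exact h
  have hSne : (S k).Nonempty := ⟨Pk 0, hPmem 0 k hk0⟩
  have hrho : Real.sqrt (rho2 φ x (S k) hSne) ≤ B := hB ⟨S k, hSne, rfl⟩
  have hnn : 0 ≤ rho2 φ x (S k) hSne := by
    have h0 := sigma2_nonneg φ x (S k)
    rw [rho2]
    positivity
  have hrho2 : rho2 φ x (S k) hSne ≤ B ^ 2 := by
    calc rho2 φ x (S k) hSne = Real.sqrt (rho2 φ x (S k) hSne) ^ 2 :=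
          (Real.sq_sqrt hnn).symm
      _ ≤ B ^ 2 := pow_le_pow_left₀ (Real.sqrt_nonneg _) hrho 2
  have hs2 : sigma2 φ x (S k) ≤ rho2 φ x (S k) hSne := by
    rw [rho2]
    have := sq_nonneg ‖x ((S k).max' hSne)‖
    linarith
  have hlt : B ^ 2 < (k:ℝ) * ε ^ 2 := by
    rw [div_lt_iff₀ (by positivity)] at hk
    linarith
  have := hsig k
  linarith

lemma norm_sub_sq_le {E : Type*} [NormedAddCommGroup E] (u v : E) :
    ‖u - v‖ ^ 2 ≤ 2 * ‖u‖ ^ 2 + 2 * ‖v‖ ^ 2 := by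
  have h1 := norm_sub_le u v
  have h2 := norm_nonneg (u - v)
  nlinarith [sq_nonneg (‖u‖ - ‖v‖)]

lemma rho2_nonneg {X : ℕ → Type*} [∀ n, NormedAddCommGroup (X n)] [∀ n, NormedSpace ℝ (X n)]
    (φ' : ∀ n, X n →L[ℝ] X (n + 1)) (x : ∀ n, X n) (S : Finset ℕ) (hS : S.Nonempty) :
    0 ≤ rho2 φ' x S hS := by
  have := sigma2_nonneg φ' x S
  rw [rho2]
  positivity

lemma rho2_le_sq {X : ℕ → Type*} [∀ n, NormedAddCommGroup (X n)] [∀ n, NormedSpace ℝ (X n)]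
    (φ' : ∀ n, X n →L[ℝ] X (n + 1)) (x : ∀ n, X n) (S : Finset ℕ) (hS : S.Nonempty)
    {B : ℝ} (hB : rhoJ φ' x S hS ≤ B) : rho2 φ' x S hS ≤ B ^ 2 := by
  calc rho2 φ' x S hS = Real.sqrt (rho2 φ' x S hS) ^ 2 :=
        (Real.sq_sqrt (rho2_nonneg φ' x S hS)).symm
    _ ≤ B ^ 2 := pow_le_pow_left₀ (Real.sqrt_nonneg _) hB 2

lemma memJhat_sub' {X : ℕ → Type*} [∀ n, NormedAddCommGroup (X n)] [∀ n, NormedSpace ℝ (X n)]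
    (φ' : ∀ n, X n →L[ℝ] X (n + 1)) (x y : ∀ n, X n)
    (hx : memJhat φ' x) (hy : memJhat φ' y) : memJhat φ' (x - y) := by
  classical
  obtain ⟨B1, hB1⟩ := hx
  obtain ⟨B2, hB2⟩ := hy
  refine ⟨Real.sqrt (2 * B1 ^ 2 + 2 * B2 ^ 2), ?_⟩
  rintro r ⟨S, hS, rfl⟩
  rw [rhoJ]
  apply Real.sqrt_le_sqrt
  have hsig : sigma2 φ' (x - y) S ≤ 2 * sigma2 φ' x S + 2 * sigma2 φ' y S := by
    rw [sigma2_eq, sigma2_eq, sigma2_eq, Finset.mul_sum, Finset.mul_sum,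
      ← Finset.sum_add_distrib]
    apply Finset.sum_le_sum
    intro pq _
    have heq : phiTo φ' pq.1 pq.2 ((x - y) pq.1) - (x - y) pq.2
        = (phiTo φ' pq.1 pq.2 (x pq.1) - x pq.2) - (phiTo φ' pq.1 pq.2 (y pq.1) - y pq.2) := by
      simp only [Pi.sub_apply, map_sub]
      abel
    rw [heq]
    exact norm_sub_sq_le _ _
  have hmax : ‖(x - y) (S.max' hS)‖ ^ 2
      ≤ 2 * ‖x (S.max' hS)‖ ^ 2 + 2 * ‖y (S.max' hS)‖ ^ 2 := by
    have : (x - y) (S.max' hS) = x (S.max' hS) - y (S.max' hS) := rfl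
    rw [this]
    exact norm_sub_sq_le _ _
  have hx2 : rho2 φ' x S hS ≤ B1 ^ 2 := rho2_le_sq φ' x S hS (hB1 ⟨S, hS, rfl⟩)
  have hy2 : rho2 φ' y S hS ≤ B2 ^ 2 := rho2_le_sq φ' y S hS (hB2 ⟨S, hS, rfl⟩)
  have hux : rho2 φ' x S hS = sigma2 φ' x S + ‖x (S.max' hS)‖ ^ 2 := rfl
  have huy : rho2 φ' y S hS = sigma2 φ' y S + ‖y (S.max' hS)‖ ^ 2 := rfl
  have hu : rho2 φ' (x - y) S hS = sigma2 φ' (x - y) S + ‖(x - y) (S.max' hS)‖ ^ 2 := rfl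
  linarith

lemma sigma2_singleton {X : ℕ → Type*} [∀ n, NormedAddCommGroup (X n)]
    [∀ n, NormedSpace ℝ (X n)] (φ' : ∀ n, X n →L[ℝ] X (n + 1)) (x : ∀ n, X n) (n : ℕ) :
    sigma2 φ' x {n} = 0 := by
  rw [sigma2]
  simp

lemma rhoJ_singleton {X : ℕ → Type*} [∀ n, NormedAddCommGroup (X n)]
    [∀ n, NormedSpace ℝ (X n)] (φ' : ∀ n, X n →L[ℝ] X (n + 1)) (x : ∀ n, X n) (n : ℕ) :
    rhoJ φ' x {n} (Finset.singleton_nonempty n) = ‖x n‖ := by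
  rw [rhoJ, rho2, sigma2_singleton]
  rw [Finset.max'_singleton]
  simp [Real.sqrt_sq (norm_nonneg _)]

lemma sigma2_zero {X : ℕ → Type*} [∀ n, NormedAddCommGroup (X n)]
    [∀ n, NormedSpace ℝ (X n)] (φ' : ∀ n, X n →L[ℝ] X (n + 1)) (S : Finset ℕ) :
    sigma2 φ' (0 : ∀ n, X n) S = 0 := by
  rw [sigma2]
  simp

lemma rhoSet_zero {X : ℕ → Type*} [∀ n, NormedAddCommGroup (X n)]
    [∀ n, NormedSpace ℝ (X n)] (φ' : ∀ n, X n →L[ℝ] X (n + 1)) :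
    rhoSet φ' (0 : ∀ n, X n) = {0} := by
  ext r
  simp only [rhoSet, Set.mem_setOf_eq, Set.mem_singleton_iff]
  constructor
  · rintro ⟨S, hS, rfl⟩
    rw [rhoJ, rho2, sigma2_zero]
    simp
  · rintro rfl
    refine ⟨{0}, Finset.singleton_nonempty 0, ?_⟩
    rw [rhoJ, rho2, sigma2_zero]
    simp

lemma memJhat_zero {X : ℕ → Type*} [∀ n, NormedAddCommGroup (X n)]
    [∀ n, NormedSpace ℝ (X n)] (φ' : ∀ n, X n →L[ℝ] X (n + 1)) :
    memJhat φ' (0 : ∀ n, X n) := by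
  rw [memJhat, rhoSet_zero]
  exact bddAbove_singleton

lemma normJ_zero {X : ℕ → Type*} [∀ n, NormedAddCommGroup (X n)]
    [∀ n, NormedSpace ℝ (X n)] (φ' : ∀ n, X n →L[ℝ] X (n + 1)) :
    normJ φ' (0 : ∀ n, X n) = 0 := by
  rw [normJ, rhoSet_zero]
  simp

end Main

/-- let `Z` be a Banach space with an unconditional Schauder
decomposition `(Z_n)_{n≥1}` (given by coordinate projections `P n` onto `Z_n = W n`)
with suppression constant `K` and lower 2-estimate constant `M`, let
`X_n = Z_1 ⊕ ⋯ ⊕ Z_n` with inclusions `φ_n`, and let `T_n = P_1 + ⋯ + P_n` be the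
aggregate projections. Then `T(z) = (T_n(z))_n` is a bounded linear embedding of `Z`
into `Ĵ(X_n)` with `‖T(z)‖_J ≤ √((M+1)/2)·K·‖z‖`, and `Ĵ(X_n) = J(X_n) ⊕ R(T)`. -/
theorem stmt17 {Z : Type*} [NormedAddCommGroup Z] [NormedSpace ℝ Z] [CompleteSpace Z]
    (W : ℕ → Submodule ℝ Z) (P : ℕ → Z →L[ℝ] Z) (K M : ℝ)
    -- `(W n)_{n ≥ 1}` is a Schauder decomposition of `Z` with projections `P n`
    (hmem : ∀ n z, P n z ∈ W n)
    (hproj : ∀ n, ∀ z ∈ W n, P n z = z)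
    (horth : ∀ i j, i ≠ j → ∀ z, P i (P j z) = 0)
    (hdecomp : ∀ z : Z, HasSum (fun n => P (n + 1) z) z)
    -- suppression constant `K`
    (hK : ∀ (F : Finset ℕ) (z : Z), ‖∑ n ∈ F, P n z‖ ≤ K * ‖z‖)
    -- lower 2-estimate with constant `M` for disjointly supported vectors
    (hM : ∀ (k : ℕ) (A : Fin k → Finset ℕ), Pairwise (Function.onFun Disjoint A) →
      ∀ z : Fin k → Z, (∀ i, ∑ n ∈ A i, P n (z i) = z i) →
      ∑ i, ‖z i‖ ^ 2 ≤ M * ‖∑ i, z i‖ ^ 2)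
    -- the chain `X_n = Z_1 ⊕ ⋯ ⊕ Z_n` with norm-one inclusions `φ_n`
    (Xs : ℕ → Submodule ℝ Z)
    (hXs : ∀ n, Xs n = ⨆ i ∈ Finset.Icc 1 n, W i)
    (φ : ∀ n, ↥(Xs n) →L[ℝ] ↥(Xs (n + 1)))
    (hφ : ∀ n (v : ↥(Xs n)), ((φ n v : Z)) = (v : Z))
    -- the map `T(z) = (T_n(z))_n` built from the aggregate projections `T_n = Σ_{i≤n} P_i`
    (T : Z → ∀ n, ↥(Xs n))
    (hT : ∀ z n, ((T z n : Z)) = ∑ i ∈ Finset.Icc 1 n, P i z) :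
    -- `T` is linear
    (∀ (a b : ℝ) (z w : Z), T (a • z + b • w) = a • T z + b • T w) ∧
    -- `T` maps into `Ĵ(X_n)` with `‖T(z)‖_J ≤ √((M+1)/2)·K·‖z‖`
    (∀ z, memJhat φ (T z)) ∧
    (∀ z, normJ φ (T z) ≤ Real.sqrt ((M + 1) / 2) * K * ‖z‖) ∧
    -- `T` is an embedding
    (∃ c : ℝ, 0 < c ∧ ∀ z, c * ‖z‖ ≤ normJ φ (T z)) ∧
    -- `Ĵ(X_n) = J(X_n) ⊕ R(T)`
    (∀ x : ∀ n, ↥(Xs n), memJhat φ x →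
      ∃! yz : (∀ n, ↥(Xs n)) × Z, memJ φ yz.1 ∧ x = yz.1 + T yz.2) := by
  classical
  have hlin : ∀ (a b : ℝ) (z w : Z), T (a • z + b • w) = a • T z + b • T w := by
    intro a b z w
    funext n
    apply Subtype.ext
    have h1 : (((a • T z + b • T w) n : Z)) = a • ((T z n : Z)) + b • ((T w n : Z)) := rfl
    rw [hT, h1, hT, hT]
    rw [Finset.smul_sum, Finset.smul_sum, ← Finset.sum_add_distrib]
    exact Finset.sum_congr rfl (fun i _ => by simp)
  by_cases htriv : ∀ z : Z, z = 0
  · have hsubX : ∀ n, Subsingleton ↥(Xs n) :=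
      fun n => ⟨fun a b => Subtype.ext (by rw [htriv (a : Z), htriv (b : Z)])⟩
    have hxzero : ∀ x : ∀ n, ↥(Xs n), x = 0 :=
      fun x => funext (fun n => @Subsingleton.elim _ (hsubX n) _ _)
    refine ⟨hlin, ?_, ?_, ?_, ?_⟩
    · intro z; rw [hxzero (T z)]; exact memJhat_zero φ
    · intro z
      rw [hxzero (T z), normJ_zero φ, htriv z]
      simp
    · refine ⟨1, one_pos, fun z => ?_⟩
      rw [hxzero (T z), normJ_zero φ, htriv z]
      simp
    · intro x hx
      refine ⟨(x, 0), ⟨⟨hx, ?_⟩, ?_⟩, ?_⟩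
      · have he : (fun n => ‖x n‖) = fun _ => (0:ℝ) := by
          funext n
          rw [@Subsingleton.elim _ (hsubX n) (x n) 0]
          simp
        rw [he]
        exact tendsto_const_nhds
      · rw [hxzero (T 0), add_zero]
      · rintro ⟨y', z'⟩ ⟨_, _⟩
        have hz' : z' = 0 := htriv z'
        subst hz'
        exact Prod.ext (by rw [hxzero y', hxzero x]) rfl
  · push_neg at htriv
    obtain ⟨z0, hz0⟩ := htriv
    have hz0n : 0 < ‖z0‖ := norm_pos_iff.mpr hz0
    have hPn : ∃ n, P n z0 ≠ 0 := by
      by_contra h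
      push_neg at h
      have h0 : HasSum (fun n => P (n + 1) z0) z0 := hdecomp z0
      have he : (fun n => P (n + 1) z0) = fun _ => (0:Z) := funext fun n => h (n + 1)
      rw [he] at h0
      exact hz0 (h0.unique hasSum_zero)
    obtain ⟨n0, hn0⟩ := hPn
    have hpn0 : 0 < ‖P n0 z0‖ := norm_pos_iff.mpr hn0
    have hM1 : 1 ≤ M := by
      have hpair : Pairwise (Function.onFun Disjoint (fun _ : Fin 1 => ({n0} : Finset ℕ))) :=
        Subsingleton.pairwise
      have hcond : ∀ i : Fin 1, ∑ n ∈ ({n0} : Finset ℕ), P n ((fun _ => P n0 z0) i)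
          = (fun _ : Fin 1 => P n0 z0) i := by
        intro i
        simp [hproj n0 _ (hmem n0 z0)]
      have h := hM 1 _ hpair (fun _ => P n0 z0) hcond
      simp at h
      have hpos : 0 < ‖P n0 z0‖ ^ 2 := by positivity
      nlinarith
    have hM0 : 0 ≤ M := by linarith
    have hK1 : 0 < K := by
      have h := hK {n0} z0
      simp at h
      nlinarith
    refine ⟨hlin, fun z => memJhat_T W P K M hmem hproj horth hK hM Xs φ hφ T hT hM0 z,
      fun z => normJ_T_le W P K M hmem hproj horth hK hM Xs φ hφ T hT hM0 z, ?_, ?_⟩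
    · refine ⟨(Real.sqrt 2)⁻¹, by positivity, fun z => ?_⟩
      have hbdd := memJhat_T W P K M hmem hproj horth hK hM Xs φ hφ T hT hM0 z
      have h1 : ∀ n : ℕ, ‖T z n‖ ≤ sSup (rhoSet φ (T z)) := by
        intro n
        apply le_csSup hbdd
        exact ⟨{n}, Finset.singleton_nonempty n, (rhoJ_singleton φ (T z) n).symm⟩
      have heq : (fun n => ‖T z n‖) = fun n => ‖∑ i ∈ Finset.Icc 1 n, P i z‖ := by
        funext n
        have h2 : ‖T z n‖ = ‖((T z n : Z))‖ := rfl
        rw [h2, hT]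
      have h2 : Tendsto (fun n => ‖T z n‖) atTop (𝓝 ‖z‖) := by
        rw [heq]
        exact (hpartial P hdecomp z).norm
      have h3 : ‖z‖ ≤ sSup (rhoSet φ (T z)) := le_of_tendsto h2 (Eventually.of_forall h1)
      rw [normJ]
      exact mul_le_mul_of_nonneg_left h3 (by positivity)
    · intro x hx
      have hc := cauchy_of_memJhat Xs φ hφ x hx
      obtain ⟨z, hz⟩ := cauchySeq_tendsto_of_complete hc
      have hyhat : memJhat φ (x - T z) :=
        memJhat_sub' φ x (T z) hx (memJhat_T W P K M hmem hproj horth hK hM Xs φ hφ T hT hM0 z)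
      have hytend : Tendsto (fun n => ‖(x - T z) n‖) atTop (𝓝 0) := by
        have heq : (fun n => ‖(x - T z) n‖)
            = fun n => ‖((x n : Z)) - ∑ i ∈ Finset.Icc 1 n, P i z‖ := by
          funext n
          have h1 : ‖(x - T z) n‖ = ‖((x n : Z)) - ((T z n : Z))‖ := rfl
          rw [h1, hT]
        rw [heq]
        have h2 := (hz.sub (hpartial P hdecomp z)).norm
        simpa using h2
      refine ⟨(x - T z, z), ⟨⟨hyhat, hytend⟩, by simp⟩, ?_⟩
      rintro ⟨y', z'⟩ ⟨⟨hy'hat, hy'tend⟩, heq⟩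
      simp only at heq hy'tend hy'hat
      have hz' : Tendsto (fun n => ((y' n : Z))) atTop (𝓝 0) := by
        rw [tendsto_zero_iff_norm_tendsto_zero]
        exact hy'tend
      have hxy : ∀ n, ∑ i ∈ Finset.Icc 1 n, P i z' = ((x n : Z)) - ((y' n : Z)) := by
        intro n
        have h1 := congrFun heq n
        have h2 : ((x n : Z)) = ((y' n : Z)) + ∑ i ∈ Finset.Icc 1 n, P i z' := by
          rw [h1]
          have h3 : (((y' + T z') n : Z)) = ((y' n : Z)) + ((T z' n : Z)) := rfl
          rw [h3, hT]
        rw [h2]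
        abel
      have hlim : Tendsto (fun n => ∑ i ∈ Finset.Icc 1 n, P i z') atTop (𝓝 z) := by
        have h4 : Tendsto (fun n => ((x n : Z)) - ((y' n : Z))) atTop (𝓝 (z - 0)) :=
          hz.sub hz'
        rw [sub_zero] at h4
        rw [show (fun n => ∑ i ∈ Finset.Icc 1 n, P i z') = fun n => ((x n : Z)) - ((y' n : Z))
          from funext hxy]
        exact h4
      have hz'' : z' = z := tendsto_nhds_unique (hpartial P hdecomp z') hlim
      subst hz''
      have hy'' : y' = x - T z' := eq_sub_of_add_eq heq.symm
      exact Prod.ext hy'' rfl
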